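/- arXiv:1305.3029 — 7 statements merged into one kernel-verified Lean document; each statement's English description precedes it below -/
import Mathlib

section
/- Suppose that to every finite group G (in a fixed universe) is assigned a group homomorphism Φ_G : G →* G such that for every homomorphism f : G →* H between finite groups one has f ∘ Φ_G = Φ_H ∘ f. Then either Φ_G is the identity homomorphism for every finite group G, or Φ_G is the trivial homomorphism (sending every element to 1) for every finite group G. -/
universe u

section Aux

/-- The cyclic group of order `n`, lifted to universe `u`. -/
abbrev CycGrp (n : ℕ) : Type u := ULift (Multiplicative (ZMod n))

/-- The canonical generator. -/
def cycGen (n : ℕ) : CycGrp.{u} n := ULift.up (Multiplicative.ofAdd 1)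

/-- The homomorphism from the cyclic group of order `n` sending the generator to
an element `g` with `g ^ n = 1`. -/
def cycHom {G : Type u} [Group G] (n : ℕ) [NeZero n] (g : G) (h : g ^ n = 1) :
    CycGrp.{u} n →* G where
  toFun x := g ^ (Multiplicative.toAdd x.down).val
  map_one' := by
    show g ^ (0 : ZMod n).val = 1
    rw [ZMod.val_zero, pow_zero]
  map_mul' x y := by
    show g ^ ((Multiplicative.toAdd x.down) + (Multiplicative.toAdd y.down)).val
        = g ^ (Multiplicative.toAdd x.down).val * g ^ (Multiplicative.toAdd y.down).val
    rw [ZMod.val_add, ← pow_add]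
    conv_rhs => rw [← Nat.mod_add_div ((Multiplicative.toAdd x.down).val
      + (Multiplicative.toAdd y.down).val) n]
    rw [pow_add, pow_mul, h, one_pow, mul_one]

theorem cycHom_gen {G : Type u} [Group G] (n : ℕ) [NeZero n] (hn : 1 < n) (g : G)
    (h : g ^ n = 1) : cycHom n g h (cycGen n) = g := by
  show g ^ (1 : ZMod n).val = g
  rw [ZMod.val_one_eq_one_mod, Nat.mod_eq_of_lt hn, pow_one]

theorem sq_one_pow_even {G : Type u} [Group G] {g : G} (h : g ^ 2 = 1) {c : ℕ}
    (hc : Even c) : g ^ c = 1 := by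
  obtain ⟨d, rfl⟩ := hc
  rw [← two_mul, pow_mul, h, one_pow]

theorem sq_one_pow_odd {G : Type u} [Group G] {g : G} (h : g ^ 2 = 1) {c : ℕ}
    (hc : Odd c) : g ^ c = g := by
  obtain ⟨d, rfl⟩ := hc
  rw [pow_add, pow_mul, h, one_pow, one_mul, pow_one]

end Aux

/-- A natural family of endomorphisms of all finite groups is either the identity
everywhere or trivial everywhere. -/
theorem center_of_category_of_finite_groups
    (Φ : ∀ (G : Type u) [Group G] [Finite G], G →* G)
    (nat : ∀ (G H : Type u) [Group G] [Finite G] [Group H] [Finite H] (f : G →* H),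
      f.comp (Φ G) = (Φ H).comp f) :
    (∀ (G : Type u) [Group G] [Finite G], Φ G = MonoidHom.id G) ∨
    (∀ (G : Type u) [Group G] [Finite G], Φ G = 1) := by
  classical
  -- the exponent function: `Φ G g = g ^ k n` whenever `g ^ n = 1`, `n ≠ 0`.
  obtain ⟨k, hk⟩ : ∃ k : ℕ → ℕ, ∀ (G : Type u) [Group G] [Finite G] (g : G) (n : ℕ),
      n ≠ 0 → g ^ n = 1 → Φ G g = g ^ k n := by
    refine ⟨fun n => if hn : n = 0 then 0 else
      haveI : NeZero n := ⟨hn⟩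
      (Multiplicative.toAdd ((Φ (CycGrp.{u} n)) (cycGen n)).down).val, ?_⟩
    intro G _ _ g n hn hg
    haveI : NeZero n := ⟨hn⟩
    rcases eq_or_lt_of_le (Nat.one_le_iff_ne_zero.mpr hn) with h1 | h1
    · -- n = 1 : g = 1
      have hg1 : g = 1 := by
        have := hg
        rw [← h1, pow_one] at this
        exact this
      simp [hg1]
    · have hnat := nat (CycGrp.{u} n) G (cycHom n g hg)
      have happ := congrArg (fun f : CycGrp.{u} n →* G => f (cycGen n)) hnat
      simp only [MonoidHom.comp_apply] at happ
      rw [cycHom_gen n h1 g hg] at happ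
      rw [← happ]
      simp only [dif_neg hn]
      rfl
  -- key dihedral computation
  have dihedral : ∀ m : ℕ, m ≠ 0 →
      (Odd (k 2) → k m ≡ 1 [MOD m]) ∧ (Even (k 2) → m ∣ k m) := by
    intro m hm
    haveI : NeZero m := ⟨hm⟩
    set D := ULift.{u} (DihedralGroup m) with hD
    let ρ : D := ULift.up (DihedralGroup.r 1)
    let s : D := ULift.up (DihedralGroup.sr 0)
    let t : D := ULift.up (DihedralGroup.sr (-1))
    have hρpow : ∀ j : ℕ, ρ ^ j = ULift.up (DihedralGroup.r (j : ZMod m)) := by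
      intro j
      apply ULift.ext
      rw [ULift.pow_down, DihedralGroup.r_one_pow]
    have hρm : ρ ^ m = 1 := by
      rw [hρpow, ZMod.natCast_self]; rfl
    have hs2 : s ^ 2 = 1 := by
      apply ULift.ext
      rw [ULift.pow_down, pow_two]
      show DihedralGroup.sr 0 * DihedralGroup.sr 0 = _
      rw [DihedralGroup.sr_mul_sr, sub_zero]; rfl
    have ht2 : t ^ 2 = 1 := by
      apply ULift.ext
      rw [ULift.pow_down, pow_two]
      show DihedralGroup.sr (-1) * DihedralGroup.sr (-1) = _
      rw [DihedralGroup.sr_mul_sr, sub_self]; rfl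
    have hts : t = ρ * s := by
      apply ULift.ext
      rw [ULift.mul_down]
      show DihedralGroup.sr (-1) = DihedralGroup.r 1 * DihedralGroup.sr 0
      rw [DihedralGroup.r_mul_sr, zero_sub]
    have hΦρ : Φ D ρ = ρ ^ k m := hk D ρ m hm hρm
    have hΦs : Φ D s = s ^ k 2 := hk D s 2 two_ne_zero hs2
    have hΦt : Φ D t = t ^ k 2 := hk D t 2 two_ne_zero ht2
    have hmul : t ^ k 2 = ρ ^ k m * s ^ k 2 := by
      rw [← hΦρ, ← hΦs, ← hΦt, hts, map_mul]
    constructor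
    · intro hodd
      have h1 : t = ρ ^ k m * s := by
        rw [← sq_one_pow_odd hs2 hodd, ← sq_one_pow_odd ht2 hodd, hmul]
      have h2 : ρ ^ k m = ρ := by
        rw [hts] at h1
        exact mul_right_cancel h1.symm
      rw [hρpow] at h2
      have h5 : DihedralGroup.r ((k m : ZMod m)) = DihedralGroup.r (1 : ZMod m) :=
        congrArg ULift.down h2
      injection h5 with h5
      have h3 : (k m : ZMod m) = ((1 : ℕ) : ZMod m) := by rwa [Nat.cast_one]
      exact (ZMod.natCast_eq_natCast_iff _ _ _).mp h3
    · intro heven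
      have h1 : (1 : D) = ρ ^ k m := by
        rw [← sq_one_pow_even ht2 heven, hmul, sq_one_pow_even hs2 heven, mul_one]
      rw [hρpow] at h1
      have h5 : DihedralGroup.r (0 : ZMod m) = DihedralGroup.r ((k m : ZMod m)) :=
        congrArg ULift.down h1
      injection h5 with h5
      exact (ZMod.natCast_eq_zero_iff _ _).mp h5.symm
  rcases Nat.even_or_odd (k 2) with hpar | hpar
  · right
    intro G _ _
    ext g
    have hm : orderOf g ≠ 0 := (orderOf_pos g).ne'
    have h := hk G g (orderOf g) hm (pow_orderOf_eq_one g)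
    rw [h, MonoidHom.one_apply]
    exact orderOf_dvd_iff_pow_eq_one.mp ((dihedral (orderOf g) hm).2 hpar)
  · left
    intro G _ _
    ext g
    have hm : orderOf g ≠ 0 := (orderOf_pos g).ne'
    have h := hk G g (orderOf g) hm (pow_orderOf_eq_one g)
    rw [h, MonoidHom.id_apply]
    conv_rhs => rw [← pow_one g]
    rw [pow_eq_pow_iff_modEq]
    exact (dihedral (orderOf g) hm).1 hpar
end

section
/- For every integer n with n ≥ 2, there exists a finite group G that admits no endomorphism of conjugacy type n, i.e. no group homomorphism α : G →* G such that α(g) is conjugate to g^n for every g ∈ G. -/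
/-- The Heisenberg group over `ZMod p`. -/
@[ext]
structure Heis (p : ℕ) where
  a : ZMod p
  b : ZMod p
  c : ZMod p

namespace Heis

variable {p : ℕ}

instance : Mul (Heis p) :=
  ⟨fun g h => ⟨g.a + h.a, g.b + h.b, g.c + h.c + g.a * h.b⟩⟩

instance : One (Heis p) := ⟨⟨0, 0, 0⟩⟩

instance : Inv (Heis p) := ⟨fun g => ⟨-g.a, -g.b, -g.c + g.a * g.b⟩⟩

@[simp] lemma mul_a (g h : Heis p) : (g * h).a = g.a + h.a := rfl
@[simp] lemma mul_b (g h : Heis p) : (g * h).b = g.b + h.b := rfl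
@[simp] lemma mul_c (g h : Heis p) : (g * h).c = g.c + h.c + g.a * h.b := rfl
@[simp] lemma one_a : (1 : Heis p).a = 0 := rfl
@[simp] lemma one_b : (1 : Heis p).b = 0 := rfl
@[simp] lemma one_c : (1 : Heis p).c = 0 := rfl
@[simp] lemma inv_a (g : Heis p) : g⁻¹.a = -g.a := rfl
@[simp] lemma inv_b (g : Heis p) : g⁻¹.b = -g.b := rfl
@[simp] lemma inv_c (g : Heis p) : g⁻¹.c = -g.c + g.a * g.b := rfl

instance : Group (Heis p) where
  mul_assoc g h k := by ext <;> simp <;> ring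
  one_mul g := by ext <;> simp
  mul_one g := by ext <;> simp
  inv_mul_cancel g := by ext <;> simp <;> ring

instance [NeZero p] : Finite (Heis p) :=
  Finite.of_injective (fun g => (g.a, g.b, g.c)) (by
    intro g h hg
    simp only [Prod.mk.injEq] at hg
    ext <;> tauto)

/-- Projection onto the first coordinate, as a monoid hom. -/
def πa : Heis p →* Multiplicative (ZMod p) where
  toFun g := Multiplicative.ofAdd g.a
  map_one' := rfl
  map_mul' g h := rfl

/-- Projection onto the second coordinate, as a monoid hom. -/
def πb : Heis p →* Multiplicative (ZMod p) where
  toFun g := Multiplicative.ofAdd g.b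
  map_one' := rfl
  map_mul' g h := rfl

/-- Embedding of the center, as a monoid hom. -/
def ι : Multiplicative (ZMod p) →* Heis p where
  toFun t := ⟨0, 0, t.toAdd⟩
  map_one' := rfl
  map_mul' s t := by ext <;> simp

lemma central (t : ZMod p) (g : Heis p) :
    g * (⟨0, 0, t⟩ : Heis p) = (⟨0, 0, t⟩ : Heis p) * g := by
  ext <;> simp <;> ring

lemma commutator_c (A B : Heis p) :
    (A * B * A⁻¹ * B⁻¹).c = A.a * B.b - B.a * A.b := by
  simp; ring

end Heis

/-- For every integer `n ≥ 2` there is a finite group admitting no endomorphism of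
conjugacy type `n`, i.e. no endomorphism `α` with `α g` conjugate to `g ^ n` for all `g`. -/
theorem exists_finite_group_without_conjugacy_type_n (n : ℤ) (hn : 2 ≤ n) :
    ∃ (G : Type) (_ : Group G) (_ : Finite G),
      ¬ ∃ α : G →* G, ∀ g : G, IsConj (α g) (g ^ n) := by
  -- pick a prime `p` bigger than `|n * (n - 1)|`
  obtain ⟨p, hp_gt, hp⟩ := Nat.exists_infinite_primes ((n * (n - 1)).natAbs + 1)
  haveI : Fact p.Prime := ⟨hp⟩
  have hprod : n * (n - 1) ≠ 0 := by nlinarith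
  have hnotdvd : ¬ ((p : ℤ) ∣ n * (n - 1)) := by
    intro hdvd
    have h1 : p ∣ (n * (n - 1)).natAbs := Int.natAbs_dvd_natAbs.mpr (by simpa using hdvd)
    have h2 : p ≤ (n * (n - 1)).natAbs :=
      Nat.le_of_dvd (Int.natAbs_pos.mpr hprod) h1
    omega
  refine ⟨Heis p, inferInstance, inferInstance, ?_⟩
  rintro ⟨α, hα⟩
  set x : Heis p := ⟨1, 0, 0⟩ with hx
  set y : Heis p := ⟨0, 1, 0⟩ with hy
  set z : Heis p := ⟨0, 0, 1⟩ with hzdef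
  set c : ZMod p := (n : ZMod p) with hc
  -- `z` is the commutator of `x` and `y`
  have hz : z = x * y * x⁻¹ * y⁻¹ := by ext <;> simp [hx, hy, hzdef]
  -- `z ^ n = ⟨0, 0, c⟩`
  have hzn : z ^ n = (⟨0, 0, c⟩ : Heis p) := by
    have h1 : z = Heis.ι (Multiplicative.ofAdd (1 : ZMod p)) := rfl
    rw [h1, ← map_zpow]
    have : (Multiplicative.ofAdd (1 : ZMod p)) ^ n
        = Multiplicative.ofAdd (c : ZMod p) := by
      rw [← ofAdd_zsmul]
      congr 1
      simp [hc]
    rw [this]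
    rfl
  -- since `z ^ n` is central, `α z = z ^ n`
  have hαz : α z = (⟨0, 0, c⟩ : Heis p) := by
    obtain ⟨u, hu⟩ := hα z
    have hu' : (u : Heis p) * α z = z ^ n * u := hu
    rw [hzn] at hu'
    rw [← Heis.central c u] at hu'
    exact mul_left_cancel hu'
  -- first/second coordinates of `α x` and `α y`
  have hcoord : ∀ (g : Heis p) (φ : Heis p →* Multiplicative (ZMod p)),
      (∀ h : Heis p, φ h = Multiplicative.ofAdd (h.a) ∨ True) → True := fun _ _ _ => trivial
  have key : ∀ g : Heis p, ∀ φ : Heis p →* Multiplicative (ZMod p),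
      φ (α g) = (φ g) ^ n := by
    intro g φ
    obtain ⟨u, hu⟩ := hα g
    have hu' : (u : Heis p) * α g = g ^ n * u := hu
    have h2 := congrArg φ hu'
    rw [map_mul, map_mul, map_zpow, mul_comm] at h2
    exact mul_right_cancel h2
  have hxa : (α x).a = c := by
    have h := key x Heis.πa
    have h' : Multiplicative.ofAdd ((α x).a)
        = (Multiplicative.ofAdd ((1 : ZMod p))) ^ n := h
    rw [← ofAdd_zsmul] at h'
    have := Multiplicative.ofAdd.injective h'
    simpa [hc] using this
  have hxb : (α x).b = 0 := by
    have h := key x Heis.πb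
    have h' : Multiplicative.ofAdd ((α x).b)
        = (Multiplicative.ofAdd ((0 : ZMod p))) ^ n := h
    rw [← ofAdd_zsmul] at h'
    have := Multiplicative.ofAdd.injective h'
    simpa using this
  have hya : (α y).a = 0 := by
    have h := key y Heis.πa
    have h' : Multiplicative.ofAdd ((α y).a)
        = (Multiplicative.ofAdd ((0 : ZMod p))) ^ n := h
    rw [← ofAdd_zsmul] at h'
    have := Multiplicative.ofAdd.injective h'
    simpa using this
  have hyb : (α y).b = c := by
    have h := key y Heis.πb
    have h' : Multiplicative.ofAdd ((α y).b)
        = (Multiplicative.ofAdd ((1 : ZMod p))) ^ n := h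
    rw [← ofAdd_zsmul] at h'
    have := Multiplicative.ofAdd.injective h'
    simpa [hc] using this
  -- compute the commutator
  have hcomm : α z = α x * α y * (α x)⁻¹ * (α y)⁻¹ := by
    rw [hz]; simp [map_mul, map_inv]
  have hcc : c = c * c := by
    have h1 : (α z).c = c := by rw [hαz]
    have h2 : (α z).c = (α x).a * (α y).b - (α y).a * (α x).b := by
      rw [hcomm]; exact Heis.commutator_c _ _
    rw [h1, hxa, hxb, hya, hyb] at h2
    linear_combination h2
  -- `c * (c - 1) = 0`, contradiction
  have hzero : c * (c - 1) = 0 := by linear_combination -hcc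
  rcases mul_eq_zero.mp hzero with h | h
  · apply hnotdvd
    have : ((n : ZMod p)) = 0 := h
    rw [ZMod.intCast_zmod_eq_zero_iff_dvd] at this
    exact this.mul_right _
  · apply hnotdvd
    have : ((n - 1 : ℤ) : ZMod p) = 0 := by push_cast; rw [sub_eq_zero]; exact sub_eq_zero.mp h ▸ rfl
    rw [ZMod.intCast_zmod_eq_zero_iff_dvd] at this
    exact this.mul_left _
end

section
/- Let n and m be natural numbers with 2 ≤ n ≤ m and m ≥ 5. Then the subgroup of the symmetric group on m letters generated by the set of all elements of order exactly n is either the alternating group A_m or the full symmetric group S_m. -/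
open Equiv Equiv.Perm Subgroup

lemma orderOf_conj' {G : Type*} [Group G] (g z : G) :
    orderOf (g * z * g⁻¹) = orderOf z := by
  have := orderOf_injective (MulAut.conj g).toMonoidHom (MulEquiv.injective _) z
  simpa [MulAut.conj] using this

lemma closure_order_normal {G : Type*} [Group G] (n : ℕ) :
    (Subgroup.closure {σ : G | orderOf σ = n}).Normal := by
  constructor
  intro x hx g
  have : (Subgroup.closure {σ : G | orderOf σ = n}).map (MulAut.conj g).toMonoidHom
      = Subgroup.closure {σ : G | orderOf σ = n} := by
    rw [MonoidHom.map_closure]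
    congr 1
    ext y
    constructor
    · rintro ⟨z, hz, rfl⟩
      simpa [MulAut.conj, orderOf_conj'] using hz
    · intro hy
      refine ⟨g⁻¹ * y * g, ?_, by simp [MulAut.conj]; group⟩
      have : orderOf (g⁻¹ * y * g) = orderOf y := by
        have := orderOf_conj' g⁻¹ y; simpa using this
      simpa [this] using hy
  rw [← this]
  exact ⟨x, hx, rfl⟩

/-- For `2 ≤ n ≤ m` and `m ≥ 5`, the subgroup of the symmetric group on `m` letters
generated by the elements of order exactly `n` is the alternating group or the whole
symmetric group. -/
theorem closure_of_elements_of_order_n_in_symmetric_group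
    (n m : ℕ) (h2 : 2 ≤ n) (hnm : n ≤ m) (h5 : 5 ≤ m) :
    Subgroup.closure {σ : Equiv.Perm (Fin m) | orderOf σ = n} = alternatingGroup (Fin m) ∨
    Subgroup.closure {σ : Equiv.Perm (Fin m) | orderOf σ = n} = ⊤ := by
  set H := Subgroup.closure {σ : Equiv.Perm (Fin m) | orderOf σ = n} with hH
  have hnorm : H.Normal := closure_order_normal n
  rcases eq_or_lt_of_le h2 with h2' | h3
  · -- n = 2 : all swaps have order 2, and swaps generate everything
    right
    rw [eq_top_iff, ← Equiv.Perm.closure_isSwap]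
    refine (Subgroup.closure_le _).2 ?_
    rintro σ ⟨a, b, hab, rfl⟩
    apply Subgroup.subset_closure
    show orderOf _ = n
    rw [← h2']
    exact orderOf_eq_prime (by rw [pow_two, Equiv.swap_mul_self]) (fun h => hab (Equiv.swap_eq_one_iff.mp h))
  -- now n ≥ 3 : find a three-cycle in H
  obtain ⟨m, rfl⟩ : ∃ k, m = k + 1 := ⟨m - 1, by omega⟩
  have hn3 : 3 ≤ n := h3
  set i : Fin (m + 1) := ⟨n - 1, by omega⟩ with hi
  have hival : (i : ℕ) = n - 1 := rfl
  have hi0 : i ≠ 0 := by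
    refine Fin.ne_of_val_ne ?_
    rw [hival, Fin.val_zero]; omega
  set c := Fin.cycleRange i with hc
  have hcH : c ∈ H := by
    apply Subgroup.subset_closure
    show orderOf c = n
    rw [← Equiv.Perm.lcm_cycleType, hc, Fin.cycleType_cycleRange hi0, Multiset.lcm_singleton,
      normalize_eq, hival]
    omega
  have v1 : ((1 : Fin (m+1)) : ℕ) = 1 := by rw [Fin.val_one']; exact Nat.mod_eq_of_lt (by omega)
  have hc0 : c 0 = 1 := by
    rw [hc, Fin.cycleRange_of_lt (Fin.pos_of_ne_zero hi0), zero_add]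
  have vc1 : ((c 1 : Fin (m+1)) : ℕ) = 2 := by
    rw [hc, Fin.cycleRange_of_lt (by rw [Fin.lt_def, hival, v1]; omega),
      Fin.val_add_one_of_lt (by rw [Fin.lt_def, v1, Fin.val_last]; omega), v1]
  set g : Equiv.Perm (Fin (m+1)) := c * (Equiv.swap 0 1 * c⁻¹ * (Equiv.swap 0 1)⁻¹) with hg
  have hgH : g ∈ H := H.mul_mem hcH (hnorm.conj_mem _ (H.inv_mem hcH) _)
  have hg3 : g.IsThreeCycle := by
    have hge : g = Equiv.swap (1 : Fin (m+1)) (c 1) * Equiv.swap 1 0 := by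
      rw [hg, show c * (Equiv.swap 0 1 * c⁻¹ * (Equiv.swap 0 1)⁻¹)
          = (c * Equiv.swap (0:Fin (m+1)) 1 * c⁻¹) * (Equiv.swap 0 1)⁻¹ by group,
        ← Equiv.swap_apply_apply, hc0, Equiv.swap_inv]
      congr 1
      exact Equiv.swap_comm 0 1
    rw [hge]
    refine Equiv.Perm.isThreeCycle_swap_mul_swap_same ?_ ?_ ?_
    · exact Fin.ne_of_val_ne (by rw [v1, vc1]; omega)
    · exact Fin.ne_of_val_ne (by rw [v1, Fin.val_zero]; omega)
    · exact Fin.ne_of_val_ne (by rw [vc1, Fin.val_zero]; omega)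
  -- the alternating group is contained in H
  have hAle : alternatingGroup (Fin (m+1)) ≤ H := by
    have card5 : 5 ≤ Fintype.card (Fin (m+1)) := by rw [Fintype.card_fin]; omega
    have hclo := hg3.alternating_normalClosure (by simpa [Nat.card_eq_fintype_card] using card5)
    intro x hx
    have hKn : (H.comap (alternatingGroup (Fin (m+1))).subtype).Normal := hnorm.comap _
    have hle : Subgroup.normalClosure ({⟨g, hg3.mem_alternatingGroup⟩} :
        Set (alternatingGroup (Fin (m+1)))) ≤ H.comap (alternatingGroup (Fin (m+1))).subtype :=
      Subgroup.normalClosure_le_normal (by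
        intro y hy
        rw [Set.mem_singleton_iff] at hy
        subst hy
        exact hgH)
    have : (⟨x, hx⟩ : alternatingGroup (Fin (m+1))) ∈
        Subgroup.normalClosure ({⟨g, hg3.mem_alternatingGroup⟩} :
        Set (alternatingGroup (Fin (m+1)))) := by rw [hclo]; trivial
    exact hle this
  by_cases hA : H = alternatingGroup (Fin (m+1))
  · left; exact hA
  · right
    obtain ⟨x, hxH, hxA⟩ : ∃ x, x ∈ H ∧ x ∉ alternatingGroup (Fin (m+1)) := by
      by_contra h
      push_neg at h
      exact hA (le_antisymm h hAle)
    rw [eq_top_iff]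
    intro y _
    by_cases hy : y ∈ alternatingGroup (Fin (m+1))
    · exact hAle hy
    · have hsx : Equiv.Perm.sign x = -1 := by
        rcases Int.units_eq_one_or (Equiv.Perm.sign x) with h | h
        · exact absurd (Equiv.Perm.mem_alternatingGroup.2 h) hxA
        · exact h
      have hsy : Equiv.Perm.sign y = -1 := by
        rcases Int.units_eq_one_or (Equiv.Perm.sign y) with h | h
        · exact absurd (Equiv.Perm.mem_alternatingGroup.2 h) hy
        · exact h
      have hmem : y * x⁻¹ ∈ alternatingGroup (Fin (m+1)) := by
        rw [Equiv.Perm.mem_alternatingGroup, map_mul, map_inv, hsx, hsy]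
        decide
      have := H.mul_mem (hAle hmem) hxH
      simpa using this
end

section
/- Let G be a nontrivial finite group of odd order such that every automorphism of G is inner (i.e. for every group isomorphism φ : G ≃* G there exists h ∈ G with φ(g) = h * g * h⁻¹ for all g). Then G admits no endomorphism of conjugacy type -1, i.e. no group homomorphism α : G →* G such that α(g) is conjugate to g⁻¹ for every g ∈ G. -/
/-- In a finite group of odd order, an element conjugate to its inverse is trivial. -/
lemma eq_one_of_isConj_inv_of_odd {G : Type*} [Group G] [Finite G]
    (hodd : Odd (Nat.card G)) {g : G} (h : IsConj g g⁻¹) : g = 1 := by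
  obtain ⟨x, hx'⟩ := isConj_iff.mp h
  -- hx' : x * g * x⁻¹ = g⁻¹
  have hx2 : (x ^ 2) * g * (x ^ 2)⁻¹ = g := by
    have h2 : x * g⁻¹ * x⁻¹ = g := by
      have := congrArg Inv.inv hx'
      simpa [mul_inv_rev, mul_assoc] using this
    calc (x ^ 2) * g * (x ^ 2)⁻¹ = x * (x * g * x⁻¹) * x⁻¹ := by rw [pow_two, mul_inv_rev]; simp [mul_assoc]
      _ = x * g⁻¹ * x⁻¹ := by rw [hx']
      _ = g := h2
  have hcomm2 : Commute (x ^ 2) g := by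
    have := mul_inv_eq_iff_eq_mul.mp hx2
    exact this
  -- x is a power of x^2 since orderOf x is odd
  have hxodd : Odd (orderOf x) := hodd.of_dvd_nat (orderOf_dvd_natCard x)
  obtain ⟨k, hk⟩ := hxodd
  have hxpow : (x ^ 2) ^ (k + 1) = x := by
    rw [← pow_mul]
    have : 2 * (k + 1) = orderOf x + 1 := by omega
    rw [this, pow_succ, pow_orderOf_eq_one, one_mul]
  have hcomm : Commute x g := by
    rw [← hxpow]; exact hcomm2.pow_left _
  have hginv : g⁻¹ = g := by
    rw [← hx', hcomm.eq]
    group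
  have hg2 : g ^ 2 = 1 := by
    rw [pow_two]
    nth_rewrite 1 [← hginv]
    exact inv_mul_cancel g
  have hdvd2 : orderOf g ∣ 2 := orderOf_dvd_of_pow_eq_one hg2
  have hdvdcard : orderOf g ∣ Nat.card G := orderOf_dvd_natCard g
  have hco : Nat.Coprime 2 (Nat.card G) := Nat.coprime_two_left.mpr hodd
  have : orderOf g ∣ 1 := hco ▸ Nat.dvd_gcd hdvd2 hdvdcard
  exact orderOf_eq_one_iff.mp (Nat.dvd_one.mp this)

/-- A nontrivial finite group of odd order all of whose automorphisms are inner admits no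
endomorphism of conjugacy type `-1`. -/
theorem no_conjugacy_type_neg_one_of_odd_complete {G : Type*} [Group G] [Finite G]
    [Nontrivial G] (hodd : Odd (Nat.card G))
    (hinn : ∀ φ : G ≃* G, ∃ h : G, ∀ g : G, φ g = h * g * h⁻¹) :
    ¬ ∃ α : G →* G, ∀ g : G, IsConj (α g) g⁻¹ := by
  rintro ⟨α, hα⟩
  -- α is injective
  have hinj : Function.Injective α := by
    rw [← MonoidHom.ker_eq_bot_iff, eq_bot_iff]
    intro g hg
    have h1 : IsConj (1 : G) g⁻¹ := by
      have := hα g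
      rwa [MonoidHom.mem_ker.mp hg] at this
    have : g⁻¹ = 1 := isConj_one_left.mp h1.symm
    simpa [Subgroup.mem_bot] using inv_eq_one.mp this
  have hbij : Function.Bijective α := Finite.injective_iff_bijective.mp hinj
  obtain ⟨h, hh⟩ := hinn (MulEquiv.ofBijective α hbij)
  -- every g is conjugate to its inverse
  have hall : ∀ g : G, IsConj g g⁻¹ := by
    intro g
    have h1 : IsConj g (α g) := by
      rw [show α g = (MulEquiv.ofBijective α hbij) g from rfl, hh g]
      exact isConj_iff.mpr ⟨h, rfl⟩
    exact h1.trans (hα g)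
  have : ∀ g : G, g = 1 := fun g => eq_one_of_isConj_inv_of_odd hodd (hall g)
  obtain ⟨a, b, hab⟩ := exists_pair_ne G
  exact hab ((this a).trans (this b).symm)
end

section
/- Suppose that for every pair of groups G, H (in a fixed universe) and every group homomorphism α : G →* H an element Ψ(α) ∈ H is given such that Ψ(α) lies in the center of the centralizer of the image of α (i.e. Ψ(α) commutes with α(g) for all g ∈ G, and Ψ(α) commutes with every element of H that commutes with all α(g)), and such that the cocycle condition Ψ(γ ∘ β) = Ψ(γ) * γ(Ψ(β)) holds for all composable homomorphisms β : L →* M and γ : M →* N. For each group F let ε_F denote the unique homomorphism from the trivial group to F, and set Φ(F) = Ψ(ε_F) ∈ F. Then for every homomorphism α : G →* H one has Ψ(α) = Φ(H) * α(Φ(G))⁻¹. -/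
universe u

/-- Every 1-cocycle `Ψ` on the category of groups with values in the centers of
centralizers is a coboundary: `Ψ α = Φ H * (α (Φ G))⁻¹` where `Φ F = Ψ ε_F` is the value
at the unique homomorphism from the trivial group. -/
theorem one_cocycle_is_coboundary
    (Ψ : ∀ (G H : Type u) [Group G] [Group H], (G →* H) → H)
    (hcomm : ∀ (G H : Type u) [Group G] [Group H] (α : G →* H) (g : G),
      Commute (Ψ G H α) (α g))
    (hcent : ∀ (G H : Type u) [Group G] [Group H] (α : G →* H) (h : H),
      (∀ g : G, Commute h (α g)) → Commute (Ψ G H α) h)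
    (hcoc : ∀ (L M N : Type u) [Group L] [Group M] [Group N] (β : L →* M) (γ : M →* N),
      Ψ L N (γ.comp β) = Ψ M N γ * γ (Ψ L M β)) :
    ∀ (G H : Type u) [Group G] [Group H] (α : G →* H),
      Ψ G H α = Ψ PUnit.{u + 1} H 1 * (α (Ψ PUnit.{u + 1} G 1))⁻¹ := by
  intro G H _ _ α
  have key := hcoc PUnit.{u+1} G H 1 α
  have hone : α.comp (1 : PUnit.{u+1} →* G) = (1 : PUnit.{u+1} →* H) := by
    ext x; simp
  rw [hone] at key
  rw [key, mul_inv_cancel_right]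
end

section
/- Let X be a topological space and let s : ZerothHomotopy X → X be a function choosing a representative point in each path component (so that the path component of s(c) is c for every c). Then there is a monoid isomorphism between the center of the fundamental groupoid of X, i.e. the monoid End(𝟭 Π₁X) of natural transformations from the identity functor of the fundamental groupoid Π₁X to itself under vertical composition, and the product over all c ∈ ZerothHomotopy X of the centers of the fundamental groups π₁(X, s(c)). -/
open CategoryTheory

namespace CenterFGAux

attribute [local instance] Path.Homotopic.setoid

variable {X : Type*} [TopologicalSpace X] (s : ZerothHomotopy X → X)

/-- component of an object -/
def k (x : FundamentalGroupoid X) : ZerothHomotopy X := @Quotient.mk' X (pathSetoid X) x.as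

/-- hom of an element of the fundamental group -/
def hm {y : X} (a : FundamentalGroup X y) :
    (⟨y⟩ : FundamentalGroupoid X) ⟶ (⟨y⟩ : FundamentalGroupoid X) :=
  FundamentalGroup.toArrow a

lemma hm_injective {y : X} : Function.Injective (hm (y := y)) := fun a b h =>
  h

/-- an endomorphism in a groupoid as an automorphism -/
noncomputable def au {y : X}
    (f : (⟨y⟩ : FundamentalGroupoid X) ⟶ (⟨y⟩ : FundamentalGroupoid X)) :
    FundamentalGroup X y :=
  FundamentalGroup.fromArrow f

@[simp] lemma hm_au {y : X} (f : (⟨y⟩ : FundamentalGroupoid X) ⟶ (⟨y⟩ : FundamentalGroupoid X)) :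
    hm (au f) = f := rfl

lemma hm_mul {y : X} (a b : FundamentalGroup X y) : hm (a * b) = hm b ≫ hm a := rfl

lemma joined_s (hs : ∀ c : ZerothHomotopy X, @Quotient.mk' X (pathSetoid X) (s c) = c)
    (x : FundamentalGroupoid X) : Joined (s (k x)) x.as := by
  have h : @Quotient.mk' X (pathSetoid X) (s (k x)) = @Quotient.mk' X (pathSetoid X) x.as := by
    rw [hs]; rfl
  exact Quotient.exact' h

/-- chosen morphism from the base point of the component of `x` to `x` -/
noncomputable def e (hs : ∀ c : ZerothHomotopy X, @Quotient.mk' X (pathSetoid X) (s c) = c)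
    (x : FundamentalGroupoid X) : (⟨s (k x)⟩ : FundamentalGroupoid X) ⟶ x :=
  ⟦(joined_s s hs x).somePath⟧

lemma key (z : ∀ c : ZerothHomotopy X, Subgroup.center (FundamentalGroup X (s c)))
    {c c' : ZerothHomotopy X} (h : c' = c) {w : FundamentalGroupoid X}
    (p : (⟨s c'⟩ : FundamentalGroupoid X) ⟶ w) (q : (⟨s c⟩ : FundamentalGroupoid X) ⟶ w) :
    Groupoid.inv p ≫ hm (z c' : FundamentalGroup X (s c')) ≫ p
      = Groupoid.inv q ≫ hm (z c : FundamentalGroup X (s c)) ≫ q := by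
  subst h
  have hcomm := Subgroup.mem_center_iff.mp (z c').2 (au (q ≫ Groupoid.inv p))
  have hc : hm (z c' : FundamentalGroup X (s c')) ≫ (q ≫ Groupoid.inv p)
      = (q ≫ Groupoid.inv p) ≫ hm (z c' : FundamentalGroup X (s c')) := by
    have := congrArg hm hcomm
    rw [hm_mul, hm_mul, hm_au] at this
    exact this
  rw [← cancel_epi q]
  calc q ≫ Groupoid.inv p ≫ hm (z c' : FundamentalGroup X (s c')) ≫ p
      = ((q ≫ Groupoid.inv p) ≫ hm (z c' : FundamentalGroup X (s c'))) ≫ p := by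
        simp only [Category.assoc]
    _ = (hm (z c' : FundamentalGroup X (s c')) ≫ (q ≫ Groupoid.inv p)) ≫ p := by rw [hc]
    _ = hm (z c' : FundamentalGroup X (s c')) ≫ q ≫ Groupoid.inv p ≫ p := by
        simp only [Category.assoc]
    _ = hm (z c' : FundamentalGroup X (s c')) ≫ q := by rw [Groupoid.inv_comp, Category.comp_id]
    _ = q ≫ Groupoid.inv q ≫ hm (z c' : FundamentalGroup X (s c')) ≫ q := by
        rw [← Category.assoc, Groupoid.comp_inv, Category.id_comp]

lemma k_eq_of_hom {x y : FundamentalGroupoid X} (f : x ⟶ y) : k x = k y := by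
  apply Quotient.sound'
  exact ⟨(show Path.Homotopic.Quotient x.as y.as from f).out⟩

/-- the natural transformation built from central elements -/
noncomputable def bwd (hs : ∀ c : ZerothHomotopy X, @Quotient.mk' X (pathSetoid X) (s c) = c)
    (z : ∀ c : ZerothHomotopy X, Subgroup.center (FundamentalGroup X (s c))) :
    End (𝟭 (FundamentalGroupoid X)) where
  app x := Groupoid.inv (e s hs x) ≫ hm (z (k x) : FundamentalGroup X (s (k x))) ≫ e s hs x
  naturality x y f := by
    have h := key s z (k_eq_of_hom f) (e s hs x ≫ f) (e s hs y)
    simp only [Functor.id_obj, Functor.id_map]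
    rw [← h]
    simp [Groupoid.inv_eq_inv]

/-- the forward monoid hom -/
noncomputable def fwd : End (𝟭 (FundamentalGroupoid X)) →*
    ∀ c : ZerothHomotopy X, Subgroup.center (FundamentalGroup X (s c)) where
  toFun α c := ⟨au (α.app ⟨s c⟩), by
    refine Subgroup.mem_center_iff.mpr fun g => ?_
    have hnat := α.naturality (hm g)
    simp only [Functor.id_obj, Functor.id_map] at hnat
    apply hm_injective
    rw [hm_mul, hm_mul, hm_au]
    exact hnat.symm⟩
  map_one' := rfl
  map_mul' α β := by
    funext c
    apply Subtype.ext
    apply hm_injective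
    rfl

lemma fwd_bijective (hs : ∀ c : ZerothHomotopy X, @Quotient.mk' X (pathSetoid X) (s c) = c) :
    Function.Bijective (fwd s) := by
  constructor
  · intro α β hαβ
    apply NatTrans.ext
    funext x
    have ha := α.naturality (e s hs x)
    have hb := β.naturality (e s hs x)
    simp only [Functor.id_obj, Functor.id_map] at ha hb
    have h0 := congrArg Subtype.val (congrFun hαβ (k x))
    have happ : α.app ⟨s (k x)⟩ = β.app ⟨s (k x)⟩ :=
      congrArg (fun w : FundamentalGroup X (s (k x)) => hm w) h0
    have heq : e s hs x ≫ α.app x = e s hs x ≫ β.app x := by rw [ha, hb, happ]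
    calc α.app x = Groupoid.inv (e s hs x) ≫ e s hs x ≫ α.app x := by
          rw [← Category.assoc, Groupoid.inv_comp, Category.id_comp]
      _ = Groupoid.inv (e s hs x) ≫ e s hs x ≫ β.app x := by rw [heq]
      _ = β.app x := by rw [← Category.assoc, Groupoid.inv_comp, Category.id_comp]
  · intro z
    refine ⟨bwd s hs z, funext fun c => Subtype.ext (hm_injective ?_)⟩
    show Groupoid.inv (e s hs ⟨s c⟩)
        ≫ hm (z (k ⟨s c⟩) : FundamentalGroup X (s (k ⟨s c⟩))) ≫ e s hs ⟨s c⟩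
      = hm (z c : FundamentalGroup X (s c))
    have h := key s z (show k (⟨s c⟩ : FundamentalGroupoid X) = c from hs c)
      (e s hs ⟨s c⟩) (𝟙 (⟨s c⟩ : FundamentalGroupoid X))
    rw [h]
    simp [Groupoid.inv_eq_inv]

end CenterFGAux

open CenterFGAux in
/-- The center of the fundamental groupoid of a space `X` is isomorphic, as a monoid, to
the product over the path components of `X` of the centers of the fundamental groups at
chosen base points. -/
theorem center_fundamentalGroupoid_iso_prod_centers
    (X : Type*) [TopologicalSpace X] (s : ZerothHomotopy X → X)
    (hs : ∀ c : ZerothHomotopy X, @Quotient.mk' X (pathSetoid X) (s c) = c) :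
    Nonempty
      (End (𝟭 (FundamentalGroupoid X)) ≃*
        ∀ c : ZerothHomotopy X, Subgroup.center (FundamentalGroup X (s c))) :=
  ⟨MulEquiv.ofBijective (fwd s) (fwd_bijective s hs)⟩
end

section
/- Let C be a connected groupoid, i.e. a groupoid in which any two objects are isomorphic, and let x be an object of C. Then there is a monoid isomorphism between End(𝟭 C), the monoid of natural transformations from the identity functor of C to itself under vertical composition, and the center of the automorphism group Aut(x) of x in C. -/
open CategoryTheory

theorem aut_mul_hom_aux {C : Type u} [Category.{v} C] {X : C} (f g : Aut X) :
    (f * g).hom = g.hom ≫ f.hom := rfl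

/-- The center of a connected groupoid is isomorphic, as a monoid, to the center of the
automorphism group of any of its objects. -/
theorem center_of_connected_groupoid (C : Type u) [Groupoid.{v} C]
    (hconn : ∀ x y : C, Nonempty (x ≅ y)) (x : C) :
    Nonempty (End (𝟭 C) ≃* Subgroup.center (Aut x)) := by
  have e : ∀ y : C, x ≅ y := fun y => (hconn x y).some
  constructor
  refine
    { toFun := fun α =>
        ⟨asIso (α.app x), Subgroup.mem_center_iff.2 fun g => ?_⟩
      invFun := fun z =>
        { app := fun y => (e y).inv ≫ z.val.hom ≫ (e y).hom
          naturality := fun a b f => ?_ }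
      left_inv := fun α => ?_
      right_inv := fun z => ?_
      map_mul' := fun α β => ?_ }
  · have h := α.naturality g.hom
    simp only [Functor.id_map] at h
    ext
    exact h.symm
  · have hz := Subgroup.mem_center_iff.1 z.2
    have hg : z.val.hom ≫ ((e a).hom ≫ f ≫ (e b).inv) =
        ((e a).hom ≫ f ≫ (e b).inv) ≫ z.val.hom := by
      have := congrArg Iso.hom (hz (asIso ((e a).hom ≫ f ≫ (e b).inv)))
      exact this
    simp only [Functor.id_map]
    calc f ≫ (e b).inv ≫ z.val.hom ≫ (e b).hom
        = (e a).inv ≫ (((e a).hom ≫ f ≫ (e b).inv) ≫ z.val.hom) ≫ (e b).hom := by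
          simp
      _ = (e a).inv ≫ (z.val.hom ≫ ((e a).hom ≫ f ≫ (e b).inv)) ≫ (e b).hom := by
          rw [hg]
      _ = ((e a).inv ≫ z.val.hom ≫ (e a).hom) ≫ f := by simp
  · apply NatTrans.ext
    funext y
    have h := α.naturality (e y).hom
    simp only [Functor.id_map] at h
    simp [← h]
  · apply Subtype.ext
    apply Iso.ext
    have hz := Subgroup.mem_center_iff.1 z.2
    have hc : z.val.hom ≫ (e x).hom = (e x).hom ≫ z.val.hom := by
      have := congrArg Iso.hom (hz (asIso (e x).hom))
      exact this
    simp [hc]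
  · apply Subtype.ext
    apply Iso.ext
    rfl
end
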